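/- The representation ρ is non-degenerate: the set { ρ(f)φ : f ∈ L¹(ℝ⁴, ℂ), φ ∈ L²(ℝ², ℂ) } is dense in L²(ℝ², ℂ). In particular, for every φ ∈ L²(ℝ², ℂ) and every ε > 0 there exists f ∈ L¹(ℝ⁴, ℂ) with ‖ρ(f)φ − φ‖ < ε. -/

import Mathlib

open MeasureTheory Complex
open scoped ENNReal

noncomputable section

/-- The pointwise action of the projective representation `U^{r,s}(k)` on functions on `ℝ²`. -/
def Ursact (hb th B r s : ℝ) (k : Fin 4 → ℝ) (φ : ℝ × ℝ → ℂ) : ℝ × ℝ → ℂ := fun p =>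
  Complex.exp
      ((Complex.I / hb) * k 2 * p.1 + (Complex.I / hb) * k 3 * p.2
        - (Complex.I * (B * (1 - r) / (r * th * B - hb))) * k 0 * p.2
        - (Complex.I * (r * B / hb)) * k 1 * p.1
        + (Complex.I * (1 / (2 * hb) + s * th * B * (1 - r) / (hb * (r * th * B - hb)))) * k 0 * k 2
        + (Complex.I * (1 / (2 * hb) - r * th * B * (1 - s) / hb ^ 2)) * k 3 * k 1
        - (Complex.I * ((s - 1 / 2) * th / hb ^ 2)) * k 2 * k 3
        + (Complex.I * (-B / (2 * hb)
            + B * (1 - r) * (r * th * B - r * s * th * B - hb) / (hb * (r * th * B - hb)))) * k 0 * k 1) *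
    φ (p.1 + (1 - s) * (th / hb) * k 3 + ((th * B * (r + s - r * s) - hb) / (r * th * B - hb)) * k 0,
       p.2 - s * (th / hb) * k 2 - ((r * th * B * (1 - s) - hb) / hb) * k 1)

/-- The integrated representation `ρ(f)φ = ∫ f(−k) U^{r,s}(k)φ dk` (Bochner integral in `L²`),
where the represented unitaries are given by the family `V`. -/
def rho
    (V : (Fin 4 → ℝ) →
      (Lp ℂ 2 (volume : Measure (ℝ × ℝ)) ≃ₗᵢ[ℂ] Lp ℂ 2 (volume : Measure (ℝ × ℝ))))
    (f : (Fin 4 → ℝ) → ℂ) (φ : Lp ℂ 2 (volume : Measure (ℝ × ℝ))) :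
    Lp ℂ 2 (volume : Measure (ℝ × ℝ)) :=
  ∫ k : Fin 4 → ℝ, f (-k) • (V k φ)

namespace Stmt7Aux

open Filter

/-- The real phase argument of `Ursact`. -/
def phaseArg (hb th B r s : ℝ) (k : Fin 4 → ℝ) (p : ℝ × ℝ) : ℝ :=
  (1/hb) * k 2 * p.1 + (1/hb) * k 3 * p.2
  - (B * (1 - r) / (r * th * B - hb)) * k 0 * p.2
  - (r * B / hb) * k 1 * p.1
  + (1 / (2 * hb) + s * th * B * (1 - r) / (hb * (r * th * B - hb))) * k 0 * k 2
  + (1 / (2 * hb) - r * th * B * (1 - s) / hb ^ 2) * k 3 * k 1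
  - ((s - 1/2) * th / hb ^ 2) * k 2 * k 3
  + (-B / (2 * hb) + B * (1 - r) * (r * th * B - r * s * th * B - hb) / (hb * (r * th * B - hb))) * k 0 * k 1

/-- The translation vector of `Ursact`. -/
def shiftVec (hb th B r s : ℝ) (k : Fin 4 → ℝ) : ℝ × ℝ :=
  ((1 - s) * (th / hb) * k 3 + ((th * B * (r + s - r * s) - hb) / (r * th * B - hb)) * k 0,
   -(s * (th / hb) * k 2) - ((r * th * B * (1 - s) - hb) / hb) * k 1)

theorem Ursact_eq (hb th B r s : ℝ) (k : Fin 4 → ℝ) (φ : ℝ × ℝ → ℂ) (p : ℝ × ℝ) :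
    Ursact hb th B r s k φ p
      = Complex.exp ((phaseArg hb th B r s k p : ℝ) * Complex.I)
          * φ (p + shiftVec hb th B r s k) := by
  unfold Ursact phaseArg shiftVec
  congr 2
  · push_cast
    ring
  · simp [Prod.ext_iff]
    constructor <;> ring

theorem norm_Ursact (hb th B r s : ℝ) (k : Fin 4 → ℝ) (φ : ℝ × ℝ → ℂ) (p : ℝ × ℝ) :
    ‖Ursact hb th B r s k φ p‖ = ‖φ (p + shiftVec hb th B r s k)‖ := by
  rw [Ursact_eq, norm_mul]
  simp [Complex.norm_exp_ofReal_mul_I]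

theorem continuous_shiftVec (hb th B r s : ℝ) : Continuous (shiftVec hb th B r s) := by
  unfold shiftVec; fun_prop

theorem continuous_phaseArg (hb th B r s : ℝ) :
    Continuous (fun q : (Fin 4 → ℝ) × (ℝ × ℝ) => phaseArg hb th B r s q.1 q.2) := by
  unfold phaseArg; fun_prop

theorem continuous_Ursact (hb th B r s : ℝ) {φ : ℝ × ℝ → ℂ} (hφ : Continuous φ) :
    Continuous (fun q : (Fin 4 → ℝ) × (ℝ × ℝ) => Ursact hb th B r s q.1 φ q.2) := by
  simp only [Ursact_eq]
  apply Continuous.mul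
  · exact Complex.continuous_exp.comp
      ((Complex.continuous_ofReal.comp (continuous_phaseArg hb th B r s)).mul continuous_const)
  · exact hφ.comp (continuous_snd.add ((continuous_shiftVec hb th B r s).comp continuous_fst))

theorem Ursact_congr (hb th B r s : ℝ) (k : Fin 4 → ℝ) {φ ψ : ℝ × ℝ → ℂ}
    (h : φ =ᵐ[volume] ψ) : Ursact hb th B r s k φ =ᵐ[volume] Ursact hb th B r s k ψ := by
  have hmp := (measurePreserving_add_right (volume : Measure (ℝ × ℝ))
      (shiftVec hb th B r s k)).quasiMeasurePreserving
  filter_upwards [hmp.ae_eq_comp h] with p hp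
  rw [Ursact_eq, Ursact_eq]
  simpa using congrArg (Complex.exp ((phaseArg hb th B r s k p : ℝ) * Complex.I) * ·) hp

theorem Ursact_zero (hb th B r s : ℝ) (φ : ℝ × ℝ → ℂ) : Ursact hb th B r s 0 φ = φ := by
  funext p
  simp [Ursact]

section
variable {hb th B r s : ℝ}
  {V : (Fin 4 → ℝ) →
      (Lp ℂ 2 (volume : Measure (ℝ × ℝ)) ≃ₗᵢ[ℂ] Lp ℂ 2 (volume : Measure (ℝ × ℝ)))}

attribute [irreducible] Ursact

theorem inner_V_eq (hV : ∀ (k : Fin 4 → ℝ) (φ : Lp ℂ 2 (volume : Measure (ℝ × ℝ))),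
      (V k φ : ℝ × ℝ → ℂ) =ᵐ[volume] Ursact hb th B r s k ⇑φ)
    {g : ℝ × ℝ → ℂ} (hgm : MemLp g 2 (volume : Measure (ℝ × ℝ)))
    (k k' : Fin 4 → ℝ) :
    (inner ℂ (V k (hgm.toLp g)) (V k' (hgm.toLp g)) : ℂ)
      = ∫ p : ℝ × ℝ, (starRingEnd ℂ) (Ursact hb th B r s k g p) * Ursact hb th B r s k' g p := by
  rw [MeasureTheory.L2.inner_def]
  apply integral_congr_ae
  have h1 := (hV k (hgm.toLp g)).trans (Ursact_congr hb th B r s k hgm.coeFn_toLp)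
  have h2 := (hV k' (hgm.toLp g)).trans (Ursact_congr hb th B r s k' hgm.coeFn_toLp)
  filter_upwards [h1, h2] with p hp1 hp2
  rw [hp1, hp2, RCLike.inner_apply, mul_comm]

set_option maxHeartbeats 1000000 in
theorem tendsto_norm_V_sub (hV : ∀ (k : Fin 4 → ℝ) (φ : Lp ℂ 2 (volume : Measure (ℝ × ℝ))),
      (V k φ : ℝ × ℝ → ℂ) =ᵐ[volume] Ursact hb th B r s k ⇑φ)
    {g : ℝ × ℝ → ℂ} (hgc : Continuous g) (hgs : HasCompactSupport g)
    (hgm : MemLp g 2 (volume : Measure (ℝ × ℝ))) (k₀ : Fin 4 → ℝ) :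
    Tendsto (fun k => ‖V k (hgm.toLp g) - V k₀ (hgm.toLp g)‖) (nhds k₀) (nhds 0) := by
  set φg := hgm.toLp g with hφg
  obtain ⟨x₀, hx₀⟩ := (hgc.norm).exists_forall_ge_of_hasCompactSupport hgs.norm
  set M := ‖g x₀‖ with hM
  have hF : ∀ k, Continuous (fun p => Ursact hb th B r s k g p) := fun k =>
    (continuous_Ursact hb th B r s hgc).comp (Continuous.prodMk_right k)
  have hbound_int : Integrable (fun p : ℝ × ℝ => M * ‖g (p + shiftVec hb th B r s k₀)‖) volume := by
    have : Integrable (fun p : ℝ × ℝ => g (p + shiftVec hb th B r s k₀)) volume :=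
      (measurePreserving_add_right (volume : Measure (ℝ × ℝ)) (shiftVec hb th B r s k₀)).integrable_comp
        (hgc.aestronglyMeasurable) |>.2 (hgc.integrable_of_hasCompactSupport hgs)
    exact (this.norm.const_mul M)
  have hinner : Tendsto (fun k => (inner ℂ (V k φg) (V k₀ φg) : ℂ)) (nhds k₀)
      (nhds (inner ℂ (V k₀ φg) (V k₀ φg) : ℂ)) := by
    simp only [hφg, inner_V_eq hV hgm]
    apply MeasureTheory.tendsto_integral_filter_of_dominated_convergence
      (fun p : ℝ × ℝ => M * ‖g (p + shiftVec hb th B r s k₀)‖)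
    · exact Eventually.of_forall fun k =>
        (((hF k).star.mul (hF k₀))).aestronglyMeasurable
    · refine Eventually.of_forall fun k => Eventually.of_forall fun p => ?_
      rw [norm_mul, RCLike.norm_conj, norm_Ursact, norm_Ursact]
      exact mul_le_mul_of_nonneg_right (hx₀ _) (norm_nonneg _)
    · exact hbound_int
    · refine Eventually.of_forall fun p => ?_
      have : Continuous fun k => (starRingEnd ℂ) (Ursact hb th B r s k g p) * Ursact hb th B r s k₀ g p := by
        exact (((continuous_Ursact hb th B r s hgc).comp
          (continuous_id.prodMk continuous_const)).star.mul continuous_const)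
      exact this.tendsto k₀
  have hsq : Tendsto (fun k => ‖V k φg - V k₀ φg‖ ^ 2) (nhds k₀) (nhds 0) := by
    have hre : Tendsto (fun k => (RCLike.re (inner ℂ (V k φg) (V k₀ φg) : ℂ) : ℝ)) (nhds k₀)
        (nhds (‖V k₀ φg‖ ^ 2)) := by
      have := (RCLike.continuous_re.tendsto _).comp hinner
      rwa [Function.comp_def, inner_self_eq_norm_sq] at this
    have heq : ∀ k, ‖V k φg - V k₀ φg‖ ^ 2
        = ‖φg‖ ^ 2 - 2 * RCLike.re (inner ℂ (V k φg) (V k₀ φg) : ℂ) + ‖V k₀ φg‖ ^ 2 := by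
      intro k
      rw [norm_sub_sq (𝕜 := ℂ), (V k).norm_map]
    simp only [heq]
    have h2 : Tendsto (fun k => ‖φg‖ ^ 2 - 2 * RCLike.re (inner ℂ (V k φg) (V k₀ φg) : ℂ)
        + ‖V k₀ φg‖ ^ 2) (nhds k₀)
        (nhds (‖φg‖ ^ 2 - 2 * ‖V k₀ φg‖ ^ 2 + ‖V k₀ φg‖ ^ 2)) :=
      (tendsto_const_nhds.sub (hre.const_mul 2)).add tendsto_const_nhds
    have : ‖φg‖ ^ 2 - 2 * ‖V k₀ φg‖ ^ 2 + ‖V k₀ φg‖ ^ 2 = 0 := by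
      rw [(V k₀).norm_map]; ring
    rwa [this] at h2
  have := (Real.continuous_sqrt.tendsto 0).comp hsq
  simp only [Function.comp_def, Real.sqrt_zero] at this
  convert this using 2 with k
  rw [Real.sqrt_sq (norm_nonneg _)]

theorem continuous_V (hV : ∀ (k : Fin 4 → ℝ) (φ : Lp ℂ 2 (volume : Measure (ℝ × ℝ))),
      (V k φ : ℝ × ℝ → ℂ) =ᵐ[volume] Ursact hb th B r s k ⇑φ)
    (φ : Lp ℂ 2 (volume : Measure (ℝ × ℝ))) :
    Continuous (fun k => V k φ) := by
  rw [continuous_iff_continuousAt]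
  intro k₀
  rw [ContinuousAt, Metric.tendsto_nhds]
  intro ε hε
  obtain ⟨g, hgs, hgnorm, hgc, hgm⟩ := (Lp.memLp φ).exists_hasCompactSupport_eLpNorm_sub_le
    (by norm_num : (2 : ℝ≥0∞) ≠ ⊤) (ε := ENNReal.ofReal (ε/6))
    (by simp [ENNReal.ofReal_eq_zero]; linarith)
  set φg := hgm.toLp g with hφg
  have hφφg : ‖φ - φg‖ ≤ ε/6 := by
    rw [Lp.norm_def]
    have h1 : (⇑(φ - φg) : ℝ × ℝ → ℂ) =ᵐ[volume] ⇑φ - g := by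
      filter_upwards [Lp.coeFn_sub φ φg, hgm.coeFn_toLp] with p hp1 hp2
      rw [hp1, Pi.sub_apply, Pi.sub_apply, hp2]
    rw [eLpNorm_congr_ae h1]
    calc (eLpNorm (⇑φ - g) 2 volume).toReal ≤ (ENNReal.ofReal (ε/6)).toReal :=
          ENNReal.toReal_mono ENNReal.ofReal_ne_top hgnorm
      _ = ε/6 := ENNReal.toReal_ofReal (by linarith)
  have hmid := tendsto_norm_V_sub hV hgc hgs hgm k₀
  have hev : ∀ᶠ k in nhds k₀, ‖V k φg - V k₀ φg‖ < ε/2 :=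
    hmid.eventually (eventually_lt_nhds (by linarith))
  filter_upwards [hev] with k hk
  rw [dist_eq_norm]
  have hdecomp : V k φ - V k₀ φ
      = (V k φ - V k φg) + (V k φg - V k₀ φg) + (V k₀ φg - V k₀ φ) := by abel
  calc ‖V k φ - V k₀ φ‖
      ≤ ‖V k φ - V k φg‖ + ‖V k φg - V k₀ φg‖ + ‖V k₀ φg - V k₀ φ‖ := by
        rw [hdecomp]; exact norm_add₃_le
    _ = ‖φ - φg‖ + ‖V k φg - V k₀ φg‖ + ‖φg - φ‖ := by
        rw [← map_sub (V k), ← map_sub (V k₀), (V k).norm_map, (V k₀).norm_map]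
    _ < ε := by
        rw [norm_sub_rev φg φ]
        linarith

theorem V_zero_eq (hV : ∀ (k : Fin 4 → ℝ) (φ : Lp ℂ 2 (volume : Measure (ℝ × ℝ))),
      (V k φ : ℝ × ℝ → ℂ) =ᵐ[volume] Ursact hb th B r s k ⇑φ)
    (φ : Lp ℂ 2 (volume : Measure (ℝ × ℝ))) : V 0 φ = φ := by
  apply Lp.ext
  have := hV 0 φ
  rwa [Ursact_zero] at this

end

end Stmt7Aux

open Stmt7Aux Filter

theorem stmt7 (hb th B r s : ℝ) (hhb : hb ≠ 0) (hth : th ≠ 0) (hB : B ≠ 0)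
    (hnd : hb - th * B ≠ 0) (hrs : r * th * B ≠ hb)
    (V : (Fin 4 → ℝ) →
      (Lp ℂ 2 (volume : Measure (ℝ × ℝ)) ≃ₗᵢ[ℂ] Lp ℂ 2 (volume : Measure (ℝ × ℝ))))
    (hV : ∀ (k : Fin 4 → ℝ) (φ : Lp ℂ 2 (volume : Measure (ℝ × ℝ))),
      (V k φ : ℝ × ℝ → ℂ) =ᵐ[volume] Ursact hb th B r s k ⇑φ) :
    Dense {ψ : Lp ℂ 2 (volume : Measure (ℝ × ℝ)) |
      ∃ (f : (Fin 4 → ℝ) → ℂ) (φ : Lp ℂ 2 (volume : Measure (ℝ × ℝ))),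
        Integrable f ∧ rho V f φ = ψ} ∧
    ∀ φ : Lp ℂ 2 (volume : Measure (ℝ × ℝ)), ∀ ε > (0 : ℝ),
      ∃ f : (Fin 4 → ℝ) → ℂ, Integrable f ∧ ‖rho V f φ - φ‖ < ε := by
  have key : ∀ φ : Lp ℂ 2 (volume : Measure (ℝ × ℝ)), ∀ ε > (0 : ℝ),
      ∃ f : (Fin 4 → ℝ) → ℂ, Integrable f ∧ ‖rho V f φ - φ‖ < ε := by
    intro φ ε hε
    have hcont := continuous_V hV φ
    have hV0 : V 0 φ = φ := V_zero_eq hV φ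
    obtain ⟨δ, hδ, hδ2⟩ := Metric.continuousAt_iff.1 (hcont.continuousAt (x := (0 : Fin 4 → ℝ)))
      (ε/2) (by linarith)
    set S := Metric.ball (0 : Fin 4 → ℝ) δ with hS
    set c : ℝ := ((volume S).toReal)⁻¹ with hcdef
    set f : (Fin 4 → ℝ) → ℂ := S.indicator (fun _ => (c : ℂ)) with hfdef
    have hSmeas : MeasurableSet S := measurableSet_ball
    have hSpos : 0 < volume S := Metric.measure_ball_pos _ _ hδ
    have hSlt : volume S < ⊤ := measure_ball_lt_top
    have htR : (0 : ℝ) < (volume S).toReal := ENNReal.toReal_pos hSpos.ne' hSlt.ne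
    have hc : 0 < c := inv_pos.2 htR
    have hfint : Integrable f :=
      (integrable_indicator_iff hSmeas).2 (integrableOn_const hSlt.ne)
    have hfneg : ∀ k, f (-k) = f k := by
      intro k
      have hmem : (-k) ∈ S ↔ k ∈ S := by
        rw [hS]
        simp [mem_ball_zero_iff]
      by_cases hk : k ∈ S
      · rw [hfdef, Set.indicator_of_mem (hmem.2 hk), Set.indicator_of_mem hk]
      · rw [hfdef, Set.indicator_of_notMem (fun h => hk (hmem.1 h)),
          Set.indicator_of_notMem hk]
    have hfcomp : (fun k : Fin 4 → ℝ => f (-k)) = f := funext hfneg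
    have hfnegint : Integrable (fun k => f (-k)) := by
      rw [hfcomp]; exact hfint
    have hInt1 : Integrable (fun k => f (-k) • (V k φ)) := by
      refine Integrable.mono' (hfnegint.norm.mul_const ‖φ‖)
        (hfnegint.aestronglyMeasurable.smul (hcont.aestronglyMeasurable)) ?_
      refine Filter.Eventually.of_forall fun k => ?_
      rw [norm_smul, (V k).norm_map]
    have hInt2 : Integrable (fun k => f (-k) • φ) := hfnegint.smul_const φ
    have hInt3 : Integrable (fun k => f (-k) • (V k φ - φ)) := by
      simp only [smul_sub]; exact hInt1.sub hInt2
    have hint_f : ∫ k : Fin 4 → ℝ, f (-k) = 1 := by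
      rw [hfcomp, hfdef, integral_indicator_const ((c : ℂ)) hSmeas, Complex.real_smul,
        ← Complex.ofReal_mul, hcdef, measureReal_def, mul_inv_cancel₀ htR.ne', Complex.ofReal_one]
    have hrho : rho V f φ - φ = ∫ k : Fin 4 → ℝ, f (-k) • (V k φ - φ) := by
      have h1 : ∫ k : Fin 4 → ℝ, f (-k) • (V k φ - φ)
          = (∫ k : Fin 4 → ℝ, f (-k) • V k φ) - ∫ k : Fin 4 → ℝ, f (-k) • φ := by
        simp only [smul_sub]
        exact integral_sub hInt1 hInt2
      rw [h1, integral_smul_const, hint_f, one_smul]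
      rfl
    have hnormf : ∫ k : Fin 4 → ℝ, ‖f (-k)‖ = 1 := by
      have : (fun k : Fin 4 → ℝ => ‖f (-k)‖) = fun k => ‖f k‖ := by
        funext k; rw [hfneg]
      rw [this, hfdef]
      simp only [norm_indicator_eq_indicator_norm]
      rw [integral_indicator_const _ hSmeas, smul_eq_mul, Complex.norm_real,
        Real.norm_eq_abs, abs_of_pos hc, hcdef, measureReal_def, mul_inv_cancel₀ htR.ne']
    refine ⟨f, hfint, ?_⟩
    rw [hrho]
    calc ‖∫ k : Fin 4 → ℝ, f (-k) • (V k φ - φ)‖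
        ≤ ∫ k : Fin 4 → ℝ, ‖f (-k) • (V k φ - φ)‖ := norm_integral_le_integral_norm _
      _ ≤ ∫ k : Fin 4 → ℝ, ‖f (-k)‖ * (ε/2) := by
          refine integral_mono hInt3.norm (hfnegint.norm.mul_const (ε/2)) fun k => ?_
          rw [norm_smul]
          by_cases hk : (-k) ∈ S
          · refine mul_le_mul_of_nonneg_left ?_ (norm_nonneg _)
            have hkd : dist k 0 < δ := by
              rw [dist_zero_right, ← norm_neg]
              exact mem_ball_zero_iff.1 hk
            have := hδ2 hkd
            rw [hV0, dist_eq_norm] at this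
            exact this.le
          · rw [hfdef]
            simp [Set.indicator_of_notMem hk]
      _ = (∫ k : Fin 4 → ℝ, ‖f (-k)‖) * (ε/2) := integral_mul_const _ _
      _ = ε/2 := by rw [hnormf, one_mul]
      _ < ε := by linarith
  refine ⟨?_, key⟩
  rw [Metric.dense_iff]
  intro x r hr
  obtain ⟨f, hfint, hlt⟩ := key x r hr
  refine ⟨rho V f x, ?_, ⟨f, x, hfint, rfl⟩⟩
  rw [Metric.mem_ball, dist_eq_norm]
  exact hlt
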